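/- For u ∈ ℤ and τ in the upper half-plane, g_{0,u/20}(τ/20) = 20·Σ_{v=0}^{19} ζ₂₀^{uv}·g_{v/20,0}(20τ) = 40i·Σ_{v=1}^{9} sin(πuv/10)·g_{v/20,0}(20τ), where ζ₂₀ = e^{2πi/20} and g_{s,t}(τ) = Σ_{ν∈ℤ+s} ν·e^{πiν²τ}·e^{2πiνt}. -/

import Mathlib

open Complex

/-- The unary theta series `g_{s,t}(τ) = Σ_{ν∈ℤ+s} ν e^{πiν²τ} e^{2πiνt}`. -/
noncomputable def unaryTheta (s t : ℝ) (τ : ℂ) : ℂ :=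
  ∑' n : ℤ, ((n : ℂ) + s) * Complex.exp (Real.pi * Complex.I * ((n : ℂ) + s)^2 * τ) *
    Complex.exp (2 * Real.pi * Complex.I * ((n : ℂ) + s) * t)

open Real in

private lemma norm_term (s t : ℝ) (τ : ℂ) (n : ℤ) :
    ‖((n:ℂ)+s) * Complex.exp (↑Real.pi * I * ((n:ℂ)+s)^2 * τ) *
      Complex.exp (2*↑Real.pi*I*((n:ℂ)+s)*t)‖
      = |(n:ℝ)+s| * Real.exp (-Real.pi * ((n:ℝ)+s)^2 * τ.im) := by
  have h1 : ((n:ℂ)+(s:ℂ)) = (((n:ℝ)+s : ℝ) : ℂ) := by push_cast; ring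
  rw [h1]
  set x := (n:ℝ)+s with hx
  clear_value x
  have e1 : ((Real.pi:ℂ) * I * ((x:ℂ))^2 * τ) = (↑(Real.pi*x^2) : ℂ) * τ * I := by
    push_cast; ring
  have e2 : (2*(Real.pi:ℂ)*I*(x:ℂ)*↑t) = (↑(2*Real.pi*x*t):ℂ) * I := by
    push_cast; ring
  rw [e1, e2, norm_mul, norm_mul]
  simp only [Complex.norm_exp, Complex.norm_real, Real.norm_eq_abs,
    Complex.mul_re, Complex.mul_im, Complex.I_re, Complex.I_im,
    Complex.ofReal_re, Complex.ofReal_im, mul_zero, zero_mul, mul_one, one_mul,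
    zero_sub, sub_zero, zero_add, add_zero, neg_zero, zero_mul]
  rw [Real.exp_zero, mul_one]
  congr 1
  ring

open Real in
private lemma summable_term (s t : ℝ) {τ : ℂ} (hτ : 0 < τ.im) :
    Summable (fun n : ℤ => ((n:ℂ)+s) * Complex.exp (↑Real.pi * I * ((n:ℂ)+s)^2 * τ) *
      Complex.exp (2*↑Real.pi*I*((n:ℂ)+s)*t)) := by
  apply Summable.of_norm
  have hb := (summable_pow_mul_jacobiTheta₂_term_bound (τ.im * |s|) hτ 1).add
    (((summable_pow_mul_jacobiTheta₂_term_bound (τ.im * |s|) hτ 0)).mul_left |s|)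
  refine hb.of_nonneg_of_le (fun n => norm_nonneg _) (fun n => ?_)
  rw [norm_term]
  have h1 : |(n:ℝ)+s| ≤ ((|n| : ℤ) : ℝ) + |s| := by
    push_cast
    exact (abs_add_le _ _).trans (by simp [Int.cast_abs])
  have h2 : Real.exp (-Real.pi * ((n:ℝ)+s)^2 * τ.im)
      ≤ Real.exp (-Real.pi * (τ.im * (n:ℝ)^2 - 2 * (τ.im * |s|) * ((|n| : ℤ) : ℝ))) := by
    apply Real.exp_le_exp.mpr
    have key : ((n:ℝ)+s)^2 ≥ (n:ℝ)^2 - 2 * |s| * |(n:ℝ)| := by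
      nlinarith [abs_nonneg ((n:ℝ)), abs_nonneg s, _root_.sq_abs ((n:ℝ)), _root_.sq_abs s,
        neg_abs_le ((n:ℝ)*s), abs_mul ((n:ℝ)) s]
    have hc : ((|n| : ℤ) : ℝ) = |(n:ℝ)| := by push_cast; ring
    rw [hc]
    have h3 : Real.pi * τ.im * ((n:ℝ)^2 - 2 * |s| * |(n:ℝ)|) ≤ Real.pi * τ.im * ((n:ℝ)+s)^2 :=
      mul_le_mul_of_nonneg_left key (by positivity)
    nlinarith [h3]
  calc |(n:ℝ)+s| * Real.exp (-Real.pi * ((n:ℝ)+s)^2 * τ.im)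
      ≤ (((|n| : ℤ) : ℝ) + |s|) * Real.exp (-Real.pi * (τ.im * (n:ℝ)^2 - 2 * (τ.im * |s|) * ((|n| : ℤ) : ℝ))) := by
        apply mul_le_mul h1 h2 (Real.exp_nonneg _) (by positivity)
    _ = ((|n| : ℤ) : ℝ)^1 * Real.exp (-Real.pi * (τ.im * (n:ℝ)^2 - 2 * (τ.im * |s|) * ((|n| : ℤ) : ℝ)))
        + |s| * (((|n| : ℤ) : ℝ)^0 * Real.exp (-Real.pi * (τ.im * (n:ℝ)^2 - 2 * (τ.im * |s|) * ((|n| : ℤ) : ℝ)))) := by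
        ring

open Real in
private lemma theta_neg (s : ℝ) (τ : ℂ) : unaryTheta (1-s) 0 τ = - unaryTheta s 0 τ := by
  rw [unaryTheta, unaryTheta, ← tsum_neg, ← (Equiv.subLeft (-1:ℤ)).tsum_eq]
  refine tsum_congr fun n => ?_
  simp only [Equiv.subLeft_apply]
  have key : ((-1 - n : ℤ):ℂ) + ((1-s:ℝ):ℂ) = -((n:ℂ)+(s:ℂ)) := by push_cast; ring
  rw [key]
  simp only [neg_sq, Complex.ofReal_zero, mul_zero, Complex.exp_zero, mul_one]
  ring

lemma theta_zero (τ : ℂ) : unaryTheta 0 0 τ = 0 := by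
  have h : unaryTheta 0 0 τ = - unaryTheta 0 0 τ := by
    conv_lhs => rw [unaryTheta, ← (Equiv.neg ℤ).tsum_eq]
    rw [unaryTheta, ← tsum_neg]
    refine tsum_congr fun n => ?_
    simp only [Equiv.neg_apply]
    have key : ((-n : ℤ):ℂ) + ((0:ℝ):ℂ) = -((n:ℂ)+((0:ℝ):ℂ)) := by push_cast; ring
    rw [key]
    simp only [neg_sq, Complex.ofReal_zero, mul_zero, Complex.exp_zero, mul_one]
    ring
  have h2 : unaryTheta 0 0 τ + unaryTheta 0 0 τ = 0 := by nth_rewrite 1 [h]; ring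
  exact add_self_eq_zero.mp h2

lemma theta_half (τ : ℂ) : unaryTheta (1/2) 0 τ = 0 := by
  have h := theta_neg (1/2) τ
  norm_num at h
  have h2 : unaryTheta (1/2) 0 τ + unaryTheta (1/2) 0 τ = 0 := by
    nth_rewrite 1 [show (1:ℝ)/2 = 2⁻¹ by norm_num, h]; ring
  exact add_self_eq_zero.mp h2

private def e20 : Fin 20 × ℤ ≃ ℤ where
  toFun p := 20 * p.2 + ((p.1 : ℕ) : ℤ)
  invFun n := (⟨(n % 20).toNat, by omega⟩, n / 20)
  left_inv := by
    rintro ⟨⟨v, hv⟩, m⟩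
    refine Prod.ext (Fin.ext ?_) ?_ <;> simp <;> omega
  right_inv := fun n => by simp; omega

/-- For `u ∈ ℤ` and `τ ∈ ℍ`:
`g_{0,u/20}(τ/20) = 20 Σ_{v=0}^{19} ζ₂₀^{uv} g_{v/20,0}(20τ)
                  = 40i Σ_{v=1}^{9} sin(πuv/10) g_{v/20,0}(20τ)`. -/
theorem stmt11 (u : ℤ) (τ : ℂ) (hτ : 0 < τ.im) :
    unaryTheta 0 ((u : ℝ)/20) (τ/20)
      = 20 * ∑ v ∈ Finset.range 20,
          Complex.exp (2 * Real.pi * Complex.I * u * v / 20) *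
            unaryTheta ((v : ℝ)/20) 0 (20 * τ) ∧
    unaryTheta 0 ((u : ℝ)/20) (τ/20)
      = 40 * Complex.I * ∑ v ∈ Finset.Icc (1:ℕ) 9,
          (Real.sin (Real.pi * u * v / 10) : ℂ) *
            unaryTheta ((v : ℝ)/20) 0 (20 * τ) := by
  have hτ' : 0 < (τ/20).im := by
    rw [show (τ/20).im = τ.im/20 by simp [Complex.div_im, Complex.normSq]]
    positivity
  have key1 : unaryTheta 0 ((u : ℝ)/20) (τ/20)
      = 20 * ∑ v ∈ Finset.range 20,
          Complex.exp (2 * Real.pi * Complex.I * u * v / 20) *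
            unaryTheta ((v : ℝ)/20) 0 (20 * τ) := by
    have hsum : Summable (fun n : ℤ => ((n:ℂ) + ((0:ℝ):ℂ)) *
        Complex.exp (↑Real.pi * I * ((n:ℂ) + ((0:ℝ):ℂ))^2 * (τ/20)) *
        Complex.exp (2*↑Real.pi*I*((n:ℂ) + ((0:ℝ):ℂ)) * ((((u:ℝ)/20):ℝ):ℂ))) :=
      summable_term 0 ((u:ℝ)/20) hτ'
    have hsum2 := hsum.comp_injective e20.injective
    simp only [Function.comp_def] at hsum2
    conv_lhs => rw [unaryTheta, ← e20.tsum_eq]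
    rw [Summable.tsum_prod' hsum2 hsum2.prod_factor, tsum_fintype]
    simp only [e20, Equiv.coe_fn_mk]
    rw [Fin.sum_univ_eq_sum_range (fun k : ℕ => ∑' m : ℤ,
        (((20 * m + (k:ℤ) :ℤ):ℂ) + ((0:ℝ):ℂ)) *
        Complex.exp (↑Real.pi * I * (((20 * m + (k:ℤ) :ℤ):ℂ) + ((0:ℝ):ℂ))^2 * (τ/20)) *
        Complex.exp (2*↑Real.pi*I*(((20 * m + (k:ℤ) :ℤ):ℂ) + ((0:ℝ):ℂ)) * ((((u:ℝ)/20):ℝ):ℂ))),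
      Finset.mul_sum]
    refine Finset.sum_congr rfl fun v hv => ?_
    rw [unaryTheta, ← tsum_mul_left, ← tsum_mul_left]
    refine tsum_congr fun m => ?_
    have c1 : ((20 * m + (v:ℤ) : ℤ):ℂ) + ((0:ℝ):ℂ) = 20 * ((m:ℂ) + (((v:ℝ)/20 : ℝ):ℂ)) := by
      push_cast; ring
    rw [c1]
    have c2 : (Real.pi:ℂ) * I * (20 * ((m:ℂ) + (((v:ℝ)/20:ℝ):ℂ)))^2 * (τ/20)
        = (Real.pi:ℂ) * I * ((m:ℂ) + (((v:ℝ)/20:ℝ):ℂ))^2 * (20*τ) := by ring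
    rw [c2]
    have c3 : 2*(Real.pi:ℂ)*I*(20*((m:ℂ)+(((v:ℝ)/20:ℝ):ℂ)))*((((u:ℝ)/20):ℝ):ℂ)
        = ((m*u:ℤ):ℂ)*(2*(Real.pi:ℂ)*I) + 2*(Real.pi:ℂ)*I*(u:ℂ)*(v:ℂ)/20 := by
      push_cast; ring
    rw [c3, Complex.exp_add, Complex.exp_int_mul_two_pi_mul_I, one_mul]
    simp only [Complex.ofReal_zero, mul_zero, Complex.exp_zero, mul_one]
    ring
  refine ⟨key1, key1.trans ?_⟩
  simp only [Finset.sum_range_succ, Finset.sum_range_zero]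
  push_cast
  rw [show Finset.Icc (1:ℕ) 9 = {1,2,3,4,5,6,7,8,9} by decide]
  rw [Finset.sum_insert (by decide), Finset.sum_insert (by decide),
    Finset.sum_insert (by decide), Finset.sum_insert (by decide),
    Finset.sum_insert (by decide), Finset.sum_insert (by decide),
    Finset.sum_insert (by decide), Finset.sum_insert (by decide),
    Finset.sum_singleton]
  push_cast
  have z0 : unaryTheta ((0:ℝ)/20) 0 (20*τ) = 0 := by rw [zero_div]; exact theta_zero _
  have z10 : unaryTheta ((10:ℝ)/20) 0 (20*τ) = 0 := by
    rw [show (10:ℝ)/20 = 1/2 by norm_num]; exact theta_half _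
  have st : ∀ x : ℂ, Complex.exp (2*(Real.pi:ℂ)*Complex.I*(u:ℂ)*x/20)
      - Complex.exp (-(2*(Real.pi:ℂ)*Complex.I*(u:ℂ)*x/20))
      = 2*Complex.I*Complex.sin ((Real.pi:ℂ)*(u:ℂ)*x/10) := by
    intro x
    rw [show 2*(Real.pi:ℂ)*Complex.I*(u:ℂ)*x/20 = ((Real.pi:ℂ)*(u:ℂ)*x/10) * Complex.I by ring]
    rw [show -(((Real.pi:ℂ)*(u:ℂ)*x/10) * Complex.I) = (-((Real.pi:ℂ)*(u:ℂ)*x/10)) * Complex.I by ring]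
    rw [Complex.exp_mul_I, Complex.exp_mul_I, Complex.cos_neg, Complex.sin_neg]
    ring
  have m11 : unaryTheta ((11:ℝ)/20) 0 (20*τ) = - unaryTheta ((9:ℝ)/20) 0 (20*τ) := by
    rw [show (11:ℝ)/20 = 1 - (9:ℝ)/20 by norm_num]; exact theta_neg _ _
  have f11 : Complex.exp (2*(Real.pi:ℂ)*Complex.I*(u:ℂ)*11/20)
      = Complex.exp (-(2*(Real.pi:ℂ)*Complex.I*(u:ℂ)*9/20)) := by
    rw [show 2*(Real.pi:ℂ)*Complex.I*(u:ℂ)*11/20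
        = ((u:ℤ):ℂ)*(2*(Real.pi:ℂ)*Complex.I) + -(2*(Real.pi:ℂ)*Complex.I*(u:ℂ)*9/20) by push_cast; ring,
      Complex.exp_add, Complex.exp_int_mul_two_pi_mul_I, one_mul]
  have m12 : unaryTheta ((12:ℝ)/20) 0 (20*τ) = - unaryTheta ((8:ℝ)/20) 0 (20*τ) := by
    rw [show (12:ℝ)/20 = 1 - (8:ℝ)/20 by norm_num]; exact theta_neg _ _
  have f12 : Complex.exp (2*(Real.pi:ℂ)*Complex.I*(u:ℂ)*12/20)
      = Complex.exp (-(2*(Real.pi:ℂ)*Complex.I*(u:ℂ)*8/20)) := by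
    rw [show 2*(Real.pi:ℂ)*Complex.I*(u:ℂ)*12/20
        = ((u:ℤ):ℂ)*(2*(Real.pi:ℂ)*Complex.I) + -(2*(Real.pi:ℂ)*Complex.I*(u:ℂ)*8/20) by push_cast; ring,
      Complex.exp_add, Complex.exp_int_mul_two_pi_mul_I, one_mul]
  have m13 : unaryTheta ((13:ℝ)/20) 0 (20*τ) = - unaryTheta ((7:ℝ)/20) 0 (20*τ) := by
    rw [show (13:ℝ)/20 = 1 - (7:ℝ)/20 by norm_num]; exact theta_neg _ _
  have f13 : Complex.exp (2*(Real.pi:ℂ)*Complex.I*(u:ℂ)*13/20)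
      = Complex.exp (-(2*(Real.pi:ℂ)*Complex.I*(u:ℂ)*7/20)) := by
    rw [show 2*(Real.pi:ℂ)*Complex.I*(u:ℂ)*13/20
        = ((u:ℤ):ℂ)*(2*(Real.pi:ℂ)*Complex.I) + -(2*(Real.pi:ℂ)*Complex.I*(u:ℂ)*7/20) by push_cast; ring,
      Complex.exp_add, Complex.exp_int_mul_two_pi_mul_I, one_mul]
  have m14 : unaryTheta ((14:ℝ)/20) 0 (20*τ) = - unaryTheta ((6:ℝ)/20) 0 (20*τ) := by
    rw [show (14:ℝ)/20 = 1 - (6:ℝ)/20 by norm_num]; exact theta_neg _ _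
  have f14 : Complex.exp (2*(Real.pi:ℂ)*Complex.I*(u:ℂ)*14/20)
      = Complex.exp (-(2*(Real.pi:ℂ)*Complex.I*(u:ℂ)*6/20)) := by
    rw [show 2*(Real.pi:ℂ)*Complex.I*(u:ℂ)*14/20
        = ((u:ℤ):ℂ)*(2*(Real.pi:ℂ)*Complex.I) + -(2*(Real.pi:ℂ)*Complex.I*(u:ℂ)*6/20) by push_cast; ring,
      Complex.exp_add, Complex.exp_int_mul_two_pi_mul_I, one_mul]
  have m15 : unaryTheta ((15:ℝ)/20) 0 (20*τ) = - unaryTheta ((5:ℝ)/20) 0 (20*τ) := by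
    rw [show (15:ℝ)/20 = 1 - (5:ℝ)/20 by norm_num]; exact theta_neg _ _
  have f15 : Complex.exp (2*(Real.pi:ℂ)*Complex.I*(u:ℂ)*15/20)
      = Complex.exp (-(2*(Real.pi:ℂ)*Complex.I*(u:ℂ)*5/20)) := by
    rw [show 2*(Real.pi:ℂ)*Complex.I*(u:ℂ)*15/20
        = ((u:ℤ):ℂ)*(2*(Real.pi:ℂ)*Complex.I) + -(2*(Real.pi:ℂ)*Complex.I*(u:ℂ)*5/20) by push_cast; ring,
      Complex.exp_add, Complex.exp_int_mul_two_pi_mul_I, one_mul]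
  have m16 : unaryTheta ((16:ℝ)/20) 0 (20*τ) = - unaryTheta ((4:ℝ)/20) 0 (20*τ) := by
    rw [show (16:ℝ)/20 = 1 - (4:ℝ)/20 by norm_num]; exact theta_neg _ _
  have f16 : Complex.exp (2*(Real.pi:ℂ)*Complex.I*(u:ℂ)*16/20)
      = Complex.exp (-(2*(Real.pi:ℂ)*Complex.I*(u:ℂ)*4/20)) := by
    rw [show 2*(Real.pi:ℂ)*Complex.I*(u:ℂ)*16/20
        = ((u:ℤ):ℂ)*(2*(Real.pi:ℂ)*Complex.I) + -(2*(Real.pi:ℂ)*Complex.I*(u:ℂ)*4/20) by push_cast; ring,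
      Complex.exp_add, Complex.exp_int_mul_two_pi_mul_I, one_mul]
  have m17 : unaryTheta ((17:ℝ)/20) 0 (20*τ) = - unaryTheta ((3:ℝ)/20) 0 (20*τ) := by
    rw [show (17:ℝ)/20 = 1 - (3:ℝ)/20 by norm_num]; exact theta_neg _ _
  have f17 : Complex.exp (2*(Real.pi:ℂ)*Complex.I*(u:ℂ)*17/20)
      = Complex.exp (-(2*(Real.pi:ℂ)*Complex.I*(u:ℂ)*3/20)) := by
    rw [show 2*(Real.pi:ℂ)*Complex.I*(u:ℂ)*17/20
        = ((u:ℤ):ℂ)*(2*(Real.pi:ℂ)*Complex.I) + -(2*(Real.pi:ℂ)*Complex.I*(u:ℂ)*3/20) by push_cast; ring,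
      Complex.exp_add, Complex.exp_int_mul_two_pi_mul_I, one_mul]
  have m18 : unaryTheta ((18:ℝ)/20) 0 (20*τ) = - unaryTheta ((2:ℝ)/20) 0 (20*τ) := by
    rw [show (18:ℝ)/20 = 1 - (2:ℝ)/20 by norm_num]; exact theta_neg _ _
  have f18 : Complex.exp (2*(Real.pi:ℂ)*Complex.I*(u:ℂ)*18/20)
      = Complex.exp (-(2*(Real.pi:ℂ)*Complex.I*(u:ℂ)*2/20)) := by
    rw [show 2*(Real.pi:ℂ)*Complex.I*(u:ℂ)*18/20
        = ((u:ℤ):ℂ)*(2*(Real.pi:ℂ)*Complex.I) + -(2*(Real.pi:ℂ)*Complex.I*(u:ℂ)*2/20) by push_cast; ring,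
      Complex.exp_add, Complex.exp_int_mul_two_pi_mul_I, one_mul]
  have m19 : unaryTheta ((19:ℝ)/20) 0 (20*τ) = - unaryTheta ((1:ℝ)/20) 0 (20*τ) := by
    rw [show (19:ℝ)/20 = 1 - (1:ℝ)/20 by norm_num]; exact theta_neg _ _
  have f19 : Complex.exp (2*(Real.pi:ℂ)*Complex.I*(u:ℂ)*19/20)
      = Complex.exp (-(2*(Real.pi:ℂ)*Complex.I*(u:ℂ)*1/20)) := by
    rw [show 2*(Real.pi:ℂ)*Complex.I*(u:ℂ)*19/20
        = ((u:ℤ):ℂ)*(2*(Real.pi:ℂ)*Complex.I) + -(2*(Real.pi:ℂ)*Complex.I*(u:ℂ)*1/20) by push_cast; ring,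
      Complex.exp_add, Complex.exp_int_mul_two_pi_mul_I, one_mul]
  rw [z0, z10, m11, f11, m12, f12, m13, f13, m14, f14, m15, f15, m16, f16, m17, f17, m18, f18, m19, f19]
  linear_combination 20 * unaryTheta ((1:ℝ)/20) 0 (20*τ) * st 1 + 20 * unaryTheta ((2:ℝ)/20) 0 (20*τ) * st 2 + 20 * unaryTheta ((3:ℝ)/20) 0 (20*τ) * st 3 + 20 * unaryTheta ((4:ℝ)/20) 0 (20*τ) * st 4 + 20 * unaryTheta ((5:ℝ)/20) 0 (20*τ) * st 5 + 20 * unaryTheta ((6:ℝ)/20) 0 (20*τ) * st 6 + 20 * unaryTheta ((7:ℝ)/20) 0 (20*τ) * st 7 + 20 * unaryTheta ((8:ℝ)/20) 0 (20*τ) * st 8 + 20 * unaryTheta ((9:ℝ)/20) 0 (20*τ) * st 9
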